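/- For a Schrödinger operator H = z²∂_zz + (1-ν)z∂_z + U(z) with potential U(z) = U_1 z + U_2 z² + ..., the monic formal series solution φ of H[φ] = 0 has coefficients φ_n = Σ_{|p|=n} Π_{j=l}^{1} (U_{p_j}/(s_j(ν-s_j))) (ordered product), and the residue of φ_n at ν = n (the n-th spectral residue ρ_n) equals Σ_{|p|=n} (n/(s_p·s_{p'})) U_{p_1}···U_{p_l}. -/

import Mathlib

/-- `psum L j` = the `j`-th left partial sum `s_j = p_1 + … + p_j` of a composition. -/
def psum (L : List ℕ) (j : ℕ) : ℕ := (L.take j).sum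

/-- `spr L` = `s_p = s_1 s_2 ⋯ s_l`, the product of the partial sums. -/
def spr (L : List ℕ) : ℕ := ∏ j ∈ Finset.range L.length, psum L (j + 1)


section Split
variable {n : ℕ}

def splitLast (hn : 0 < n) : Composition n ≃ Σ j : Fin n, Composition j where
  toFun c := ⟨⟨c.blocks.dropLast.sum, by
      have hne : c.blocks ≠ [] := by
        intro h
        have := c.blocks_sum
        rw [h] at this; simp at this; omega
      have h1 : c.blocks.dropLast.sum + c.blocks.getLast hne = n := by
        conv_rhs => rw [← c.blocks_sum, ← c.blocks.dropLast_concat_getLast hne]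
        simp
      have h2 : 0 < c.blocks.getLast hne := c.blocks_pos (c.blocks.getLast_mem hne)
      omega⟩,
    ⟨c.blocks.dropLast, fun hi => c.blocks_pos (List.dropLast_subset _ hi), rfl⟩⟩
  invFun x := ⟨x.2.blocks ++ [n - x.1], by
      intro i hi
      rcases List.mem_append.1 hi with h | h
      · exact x.2.blocks_pos h
      · simp at h; subst h; omega, by
      simp only [List.sum_append, List.sum_cons, List.sum_nil, x.2.blocks_sum]; omega⟩
  left_inv c := by
    have hne : c.blocks ≠ [] := by
      intro h
      have := c.blocks_sum
      rw [h] at this; simp at this; omega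
    ext1
    show c.blocks.dropLast ++ [n - c.blocks.dropLast.sum] = c.blocks
    have h1 : c.blocks.dropLast.sum + c.blocks.getLast hne = n := by
      conv_rhs => rw [← c.blocks_sum, ← c.blocks.dropLast_concat_getLast hne]
      simp
    have : n - c.blocks.dropLast.sum = c.blocks.getLast hne := by omega
    rw [this, c.blocks.dropLast_concat_getLast hne]
  right_inv x := by
    rcases x with ⟨⟨j, hj⟩, d⟩
    rcases d with ⟨blocks, pos, hsum⟩
    simp only at hsum
    subst hsum
    have hd : (blocks ++ [n - blocks.sum]).dropLast = blocks := by simp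
    refine Sigma.ext ?_ ?_
    · simp [hd]
    · simp only
      congr 1 <;> simp [hd]
end Split

lemma Composition.blocks_eq_nil' (c : Composition 0) : c.blocks = [] := by
  rcases h : c.blocks with _ | ⟨a, l⟩
  · rfl
  · exfalso
    have hs := c.blocks_sum
    have ha : 0 < a := c.blocks_pos (by rw [h]; exact List.mem_cons_self)
    rw [h] at hs; simp at hs; omega

lemma sum_comp_zero {M : Type*} [AddCommMonoid M] (g : List ℕ → M) :
    ∑ d : Composition 0, g d.blocks = g [] := by
  have h1 : ∀ d : Composition 0, g d.blocks = g [] := fun d => by rw [d.blocks_eq_nil']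
  rw [Finset.sum_congr rfl (fun d _ => h1 d), Finset.sum_const, Finset.card_univ,
    composition_card]
  simp

lemma sum_split {M : Type*} [AddCommMonoid M] {n : ℕ} (hn : 0 < n) (f : List ℕ → M) :
    ∑ c : Composition n, f c.blocks
      = f [n] + ∑ j ∈ Finset.Ico 1 n, ∑ d : Composition j, f (d.blocks ++ [n - j]) := by
  rw [← Equiv.sum_comp (splitLast hn).symm (fun c => f c.blocks)]
  rw [show (Finset.univ : Finset ((j : Fin n) × Composition j.1)) = Finset.univ.sigma (fun _ => Finset.univ) from rfl, Finset.sum_sigma]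
  have hins : Finset.range n = insert 0 (Finset.Ico 1 n) := by
    ext i; simp [Finset.mem_range, Finset.mem_Ico]; omega
  have : ∀ j : Fin n, ∑ d : Composition j.1,
      f (((splitLast hn).symm ⟨j, d⟩).blocks) = ∑ d : Composition j.1, f (d.blocks ++ [n - j.1]) :=
    fun j => rfl
  rw [Fintype.sum_congr _ _ this, Fin.sum_univ_eq_sum_range
    (fun j => ∑ d : Composition j, f (d.blocks ++ [n - j])), hins,
    Finset.sum_insert (by simp)]
  congr 1
  rw [sum_comp_zero (fun L => f (L ++ [n - 0]))]
  simp

lemma psum_append_le {L M : List ℕ} {k : ℕ} (h : k ≤ L.length) :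
    psum (L ++ M) k = psum L k := by
  unfold psum; rw [List.take_append_of_le_length h]

lemma psum_length (L : List ℕ) : psum L L.length = L.sum := by
  unfold psum; rw [List.take_length]

lemma psum_pos {L : List ℕ} (hpos : ∀ x ∈ L, 0 < x) {k : ℕ} (h : k < L.length) :
    0 < psum L (k + 1) := by
  unfold psum
  refine List.sum_pos _ (fun x hx => hpos x (List.take_subset _ _ hx)) ?_
  intro hnil
  have := congrArg List.length hnil
  simp only [List.length_take, List.length_nil] at this; omega

lemma psum_lt {L : List ℕ} (hpos : ∀ x ∈ L, 0 < x) {k : ℕ} (h : k + 1 < L.length) :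
    psum L (k + 1) < L.sum := by
  have hsplit : (L.take (k+1)).sum + (L.drop (k+1)).sum = L.sum := by
    rw [← List.sum_append]; simp
  have hdpos : 0 < (L.drop (k+1)).sum := by
    refine List.sum_pos _ (fun x hx => hpos x (List.drop_subset _ _ hx)) ?_
    intro hnil
    have := congrArg List.length hnil
    simp only [List.length_drop, List.length_nil] at this; omega
  unfold psum; omega

lemma psum_reverse {L : List ℕ} {k : ℕ} (h : k ≤ L.length) :
    psum L.reverse k = L.sum - psum L (L.length - k) := by
  unfold psum
  rw [List.take_reverse, List.sum_reverse]
  have : (L.take (L.length - k)).sum + (L.drop (L.length - k)).sum = L.sum := by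
    rw [← List.sum_append]; simp
  omega

open Filter in
lemma limit_lemma {n : ℕ} (hn : 0 < n) (L : List ℕ) (hpos : ∀ x ∈ L, 0 < x)
    (hsum : L.sum = n) (hne : L ≠ []) :
    Tendsto
      (fun ν : ℝ => (ν - (n : ℝ)) * ∏ j ∈ Finset.range L.length,
        ((psum L (j + 1) : ℝ) * (ν - (psum L (j + 1) : ℝ)))⁻¹)
      (nhdsWithin (n : ℝ) {(n : ℝ)}ᶜ)
      (nhds ((((n : ℚ) / ((spr L : ℚ) * spr L.reverse)) : ℚ) : ℝ)) := by
  set l := L.length with hl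
  have hl1 : 1 ≤ l := by
    rcases L with _ | ⟨a, t⟩
    · exact absurd rfl hne
    · simp [hl]
  have hlt : ∀ j ∈ Finset.range (l - 1), psum L (j + 1) < n := by
    intro j hj
    rw [Finset.mem_range] at hj
    rw [← hsum]
    exact psum_lt hpos (by omega)
  have hps : ∀ j ∈ Finset.range (l - 1), 0 < psum L (j + 1) := by
    intro j hj
    rw [Finset.mem_range] at hj
    exact psum_pos hpos (by omega)
  have hlast : psum L l = n := by rw [psum_length, hsum]
  -- value identity
  have hsprL : spr L = (∏ j ∈ Finset.range (l - 1), psum L (j + 1)) * n := by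
    unfold spr
    rw [← hl, show l = (l - 1) + 1 by omega, Finset.prod_range_succ]
    rw [show l - 1 + 1 = l by omega, hlast]
  have hsprR : spr L.reverse = n * ∏ j ∈ Finset.range (l - 1), (n - psum L (j + 1)) := by
    unfold spr
    rw [List.length_reverse, ← hl]
    have h1 : ∀ j ∈ Finset.range l, psum L.reverse (j + 1) = n - psum L (l - 1 - j) := by
      intro j hj
      rw [Finset.mem_range] at hj
      rw [psum_reverse (by omega), hsum,
        show L.length - (j + 1) = l - 1 - j by omega]
    rw [Finset.prod_congr rfl h1, Finset.prod_range_reflect (fun j => n - psum L j) l]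
    conv_lhs => rw [show l = (l - 1) + 1 by omega, Finset.prod_range_succ']
    rw [show psum L 0 = 0 from rfl, Nat.sub_zero, mul_comm]
  -- the continuous model function
  set P : ℝ → ℝ := fun ν => (∏ j ∈ Finset.range (l - 1),
      ((psum L (j + 1) : ℝ) * (ν - (psum L (j + 1) : ℝ)))⁻¹) * (n : ℝ)⁻¹ with hP
  have hval : ((((n : ℚ) / ((spr L : ℚ) * spr L.reverse)) : ℚ) : ℝ) = P (n : ℝ) := by
    push_cast
    rw [hsprL, hsprR, hP]
    push_cast
    have h2 : ∀ j ∈ Finset.range (l - 1),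
        ((psum L (j + 1) : ℝ) * ((n : ℝ) - (psum L (j + 1) : ℝ)))⁻¹
          = ((psum L (j + 1) : ℝ) * ((n - psum L (j + 1) : ℕ) : ℝ))⁻¹ := by
      intro j hj
      rw [Nat.cast_sub (le_of_lt (hlt j hj))]
    rw [Finset.prod_congr rfl h2, Finset.prod_inv_distrib, Finset.prod_mul_distrib]
    have hPne : (∏ j ∈ Finset.range (l - 1), ((psum L (j + 1) : ℕ) : ℝ)) ≠ 0 := by
      apply Finset.prod_ne_zero_iff.2
      intro j hj
      have := hps j hj
      positivity
    have hQne : (∏ j ∈ Finset.range (l - 1), ((n - psum L (j + 1) : ℕ) : ℝ)) ≠ 0 := by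
      apply Finset.prod_ne_zero_iff.2
      intro j hj
      have h3 := hlt j hj
      have : 0 < n - psum L (j + 1) := by omega
      positivity
    have hnne : (n : ℝ) ≠ 0 := Nat.cast_ne_zero.2 (by omega)
    field_simp
  have hcont : Tendsto P (nhds (n : ℝ)) (nhds (P (n : ℝ))) := by
    apply Filter.Tendsto.mul _ tendsto_const_nhds
    apply tendsto_finset_prod
    intro j hj
    apply Filter.Tendsto.inv₀
    · exact tendsto_const_nhds.mul (tendsto_id.sub tendsto_const_nhds)
    · have h1 := hps j hj
      have h2 := hlt j hj
      have h3 : (0:ℝ) < (psum L (j+1) : ℝ) := by exact_mod_cast h1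
      have h4 : (psum L (j+1) : ℝ) < (n : ℝ) := by exact_mod_cast h2
      exact ne_of_gt (mul_pos h3 (by linarith))
  rw [hval]
  refine Filter.Tendsto.congr' ?_ (hcont.mono_left nhdsWithin_le_nhds)
  refine Filter.eventuallyEq_of_mem self_mem_nhdsWithin (fun ν hν => ?_)
  have hνn : ν ≠ (n : ℝ) := hν
  have hsub : ν - (n : ℝ) ≠ 0 := sub_ne_zero.2 hνn
  simp only [hP]
  conv_rhs => rw [show l = (l - 1) + 1 by omega, Finset.prod_range_succ]
  rw [show l - 1 + 1 = l by omega, hlast]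
  have hcalc : (ν - (n:ℝ)) * ((∏ j ∈ Finset.range (l - 1),
        ((psum L (j + 1) : ℝ) * (ν - (psum L (j + 1) : ℝ)))⁻¹) * ((n:ℝ) * (ν - (n:ℝ)))⁻¹)
      = (∏ j ∈ Finset.range (l - 1),
        ((psum L (j + 1) : ℝ) * (ν - (psum L (j + 1) : ℝ)))⁻¹) * ((n:ℝ))⁻¹ := by
    calc (ν - (n:ℝ)) * ((∏ j ∈ Finset.range (l - 1),
          ((psum L (j + 1) : ℝ) * (ν - (psum L (j + 1) : ℝ)))⁻¹) * ((n:ℝ) * (ν - (n:ℝ)))⁻¹)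
        = ((∏ j ∈ Finset.range (l - 1),
          ((psum L (j + 1) : ℝ) * (ν - (psum L (j + 1) : ℝ)))⁻¹) * ((n:ℝ))⁻¹)
            * ((ν - (n:ℝ)) * (ν - (n:ℝ))⁻¹) := by rw [mul_inv]; ring
      _ = _ := by rw [mul_inv_cancel₀ hsub, mul_one]
  exact hcalc.symm

/-- scalar coefficient -/
def cf (ν : ℚ) (L : List ℕ) : ℚ :=
  ∏ j ∈ Finset.range L.length, ((psum L (j + 1) : ℚ) * (ν - (psum L (j + 1) : ℚ)))⁻¹

lemma cf_singleton (ν : ℚ) (x : ℕ) : cf ν [x] = ((x : ℚ) * (ν - (x : ℚ)))⁻¹ := by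
  unfold cf
  simp [psum]

lemma cf_append (ν : ℚ) (L : List ℕ) (x : ℕ) :
    cf ν (L ++ [x]) = cf ν L * (((L.sum + x : ℕ) : ℚ) * (ν - ((L.sum + x : ℕ) : ℚ)))⁻¹ := by
  unfold cf
  rw [List.length_append, List.length_singleton, Finset.prod_range_succ]
  congr 1
  · apply Finset.prod_congr rfl
    intro j hj
    rw [Finset.mem_range] at hj
    rw [psum_append_le (by omega)]
  · rw [show psum (L ++ [x]) (L.length + 1) = (L ++ [x]).sum by
      rw [← psum_length (L ++ [x])]; congr 1; simp]
    simp

section Part1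
variable {A : Type*} [Ring A] [Algebra ℚ A]

/-- the candidate solution -/
noncomputable def F (U : ℕ → A) (ν : ℚ) (n : ℕ) : A :=
  ∑ c : Composition n, cf ν c.blocks • (c.blocks.reverse.map U).prod

lemma key_rec (U : ℕ → A) {n : ℕ} (hn : 0 < n) {ν : ℚ} (hν : ∀ m : ℕ, 0 < m → ν ≠ (m : ℚ)) :
    ((n : ℚ) * (ν - (n : ℚ))) • F U ν n
      = U n + ∑ j ∈ Finset.Ico 1 n, U (n - j) * F U ν j := by
  set q : ℚ := (n : ℚ) * (ν - (n : ℚ)) with hq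
  have hqne : q ≠ 0 := by
    apply mul_ne_zero
    · exact Nat.cast_ne_zero.2 (by omega)
    · exact sub_ne_zero.2 (hν n hn)
  unfold F
  rw [sum_split hn (fun L => cf ν L • (L.reverse.map U).prod), smul_add]
  congr 1
  · rw [cf_singleton]
    simp only [List.reverse_singleton, List.map_cons, List.map_nil, List.prod_cons,
      List.prod_nil, mul_one]
    rw [smul_smul, hq, mul_inv_cancel₀ hqne, one_smul]
  · rw [Finset.smul_sum]
    apply Finset.sum_congr rfl
    intro j hj
    rw [Finset.mem_Ico] at hj
    rw [Finset.smul_sum, Finset.mul_sum]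
    apply Finset.sum_congr rfl
    intro d _
    rw [cf_append, d.blocks_sum, show j + (n - j) = n by omega]
    rw [List.reverse_append, List.reverse_singleton, List.singleton_append,
      List.map_cons, List.prod_cons]
    rw [smul_smul, hq]
    rw [mul_comm (cf ν d.blocks), ← mul_assoc, mul_inv_cancel₀ hqne, one_mul]
    rw [mul_smul_comm]

lemma phi_eq_F (U : ℕ → A) (φ : ℕ → ℚ → A)
    (hrec : ∀ n : ℕ, 0 < n → ∀ ν : ℚ, (∀ m : ℕ, 0 < m → ν ≠ (m : ℚ)) →
      ((n : ℚ) * (ν - (n : ℚ))) • φ n ν = U n + ∑ j ∈ Finset.Ico 1 n, U (n - j) * φ j ν) :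
    ∀ n : ℕ, 0 < n → ∀ ν : ℚ, (∀ m : ℕ, 0 < m → ν ≠ (m : ℚ)) → φ n ν = F U ν n := by
  intro n
  induction n using Nat.strong_induction_on with
  | _ n IH =>
    intro hn ν hν
    have h1 := hrec n hn ν hν
    have h2 := key_rec (A := A) U hn hν
    have h3 : ∑ j ∈ Finset.Ico 1 n, U (n - j) * φ j ν
        = ∑ j ∈ Finset.Ico 1 n, U (n - j) * F U ν j := by
      apply Finset.sum_congr rfl
      intro j hj
      rw [Finset.mem_Ico] at hj
      rw [IH j hj.2 hj.1 ν hν]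
    rw [h3, ← h2] at h1
    have hqne : ((n : ℚ) * (ν - (n : ℚ))) ≠ 0 := by
      apply mul_ne_zero
      · exact Nat.cast_ne_zero.2 (by omega)
      · exact sub_ne_zero.2 (hν n hn)
    have h4 := congrArg (fun x => ((n : ℚ) * (ν - (n : ℚ)))⁻¹ • x) h1
    simp only [smul_smul, inv_mul_cancel₀ hqne, one_smul] at h4
    exact h4

end Part1

def compReverse {n : ℕ} (c : Composition n) : Composition n :=
  ⟨c.blocks.reverse, fun hi => c.blocks_pos (List.mem_reverse.1 hi),
    by rw [List.sum_reverse, c.blocks_sum]⟩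

lemma compReverse_involutive {n : ℕ} : Function.Involutive (compReverse (n := n)) := by
  intro c
  ext1
  simp [compReverse]

def revPerm {n : ℕ} : Equiv.Perm (Composition n) := compReverse_involutive.toPerm _


/-- For a Schrödinger operator `H = z²∂_zz + (1-ν)z∂_z + U(z)` with potential
`U(z) = U_1 z + U_2 z² + …` (coefficients in a possibly noncommutative ℚ-algebra), the monic
formal series solution `φ` of `H[φ] = 0` — i.e. `φ` satisfying the recursion
`n(ν-n)φ_n = U_n + Σ_{j=1}^{n-1} U_{n-j}φ_j` away from the poles — has coefficients
`φ_n = Σ_{|p|=n} Π_{j=l}^{1} (U_{p_j} / (s_j(ν - s_j)))` (ordered product), and the residue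
of `φ_n` at `ν = n` (the `n`-th spectral residue, computed coefficientwise via limits of the
scalar rational functions) equals `Σ_{|p|=n} (n/(s_p s_{p'})) U_{p_1}⋯U_{p_l}`. -/
theorem schrodinger_solution_and_spectral_residue {A : Type*} [Ring A] [Algebra ℚ A]
    (U : ℕ → A) (φ : ℕ → ℚ → A)
    (hφ0 : ∀ ν : ℚ, φ 0 ν = 1)
    (hrec : ∀ n : ℕ, 0 < n → ∀ ν : ℚ, (∀ m : ℕ, 0 < m → ν ≠ (m : ℚ)) →
      ((n : ℚ) * (ν - (n : ℚ))) • φ n ν = U n + ∑ j ∈ Finset.Ico 1 n, U (n - j) * φ j ν)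
    (n : ℕ) (hn : 0 < n) :
    (∀ ν : ℚ, (∀ m : ℕ, 0 < m → ν ≠ (m : ℚ)) →
      φ n ν = ∑ c : Composition n,
        (∏ j ∈ Finset.range c.length,
            ((psum c.blocks (j + 1) : ℚ) * (ν - (psum c.blocks (j + 1) : ℚ)))⁻¹) •
          (c.blocks.reverse.map U).prod) ∧
    (∀ r : Composition n → ℚ,
      (∀ c : Composition n,
        Filter.Tendsto
          (fun ν : ℝ => (ν - (n : ℝ)) * ∏ j ∈ Finset.range c.length,
            ((psum c.blocks (j + 1) : ℝ) * (ν - (psum c.blocks (j + 1) : ℝ)))⁻¹)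
          (nhdsWithin (n : ℝ) {(n : ℝ)}ᶜ) (nhds ((r c : ℚ) : ℝ))) →
      (∑ c : Composition n, (r c) • (c.blocks.reverse.map U).prod) =
        ∑ c : Composition n,
          ((n : ℚ) / ((spr c.blocks : ℚ) * spr c.blocks.reverse)) • (c.blocks.map U).prod) := by
  constructor
  · intro ν hν
    rw [phi_eq_F U φ hrec n hn ν hν]
    rfl
  · intro r hr
    have hbne : ∀ c : Composition n, c.blocks ≠ [] := by
      intro c h
      have := c.blocks_sum
      rw [h] at this
      simp at this
      omega
    have hrc : ∀ c : Composition n,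
        r c = (n : ℚ) / ((spr c.blocks : ℚ) * spr c.blocks.reverse) := by
      intro c
      have hL := limit_lemma hn c.blocks (fun x hx => c.blocks_pos hx) c.blocks_sum (hbne c)
      have := tendsto_nhds_unique (hr c) hL
      exact_mod_cast this
    rw [Finset.sum_congr rfl (fun c _ => by rw [hrc c])]
    conv_rhs => rw [← Equiv.sum_comp (revPerm (n := n))
      (fun c => ((n : ℚ) / ((spr c.blocks : ℚ) * spr c.blocks.reverse)) • (c.blocks.map U).prod)]
    apply Finset.sum_congr rfl
    intro c _
    show _ = ((n : ℚ) / ((spr (compReverse c).blocks : ℚ) * spr (compReverse c).blocks.reverse)) •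
        ((compReverse c).blocks.map U).prod
    simp only [compReverse, List.reverse_reverse]
    rw [mul_comm ((spr c.blocks.reverse : ℚ))]
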